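/- Let X be a finite connected pre-ordered set, R a 2-torsion free commutative ring with unity, and L a Lie triple derivation of I(X,R) with coefficients C^{ij}_{xy}. Then C^{ii}_{xx} = C^{ii}_{ii} for all i, x ∈ X; equivalently, the diagonal part of L(e_{ii}) is a scalar multiple of the identity δ. -/

import Mathlib

open IncidenceAlgebra
open scoped Classical

variable {R X : Type*}

/-- The matrix unit `e_{x y}` of the incidence algebra (zero if `¬ x ≤ y`). -/
noncomputable def matrixUnit [CommRing R] [Preorder X] [DecidableEq X] (x y : X) :
    IncidenceAlgebra R X :=
  ⟨fun u v => if u = x ∧ v = y ∧ x ≤ y then 1 else 0, fun a b hab => by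
    split_ifs with h
    · exact absurd (by rw [h.1, h.2.1]; exact h.2.2) hab
    · rfl⟩

/-- The Lie bracket `[f,g] = fg - gf`. -/
def lieBr {A : Type*} [Ring A] (f g : A) : A := f * g - g * f

/-- `L` is a Lie triple derivation of the incidence algebra. -/
def IsLieTripleDer [CommRing R] [Preorder X] [DecidableEq X] [LocallyFiniteOrder X]
    (L : IncidenceAlgebra R X →ₗ[R] IncidenceAlgebra R X) : Prop :=
  ∀ f g h : IncidenceAlgebra R X,
    L (lieBr (lieBr f g) h) =
      lieBr (lieBr (L f) g) h + lieBr (lieBr f (L g)) h + lieBr (lieBr f g) (L h)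

/-- `X` is connected: any two points are joined by a chain of comparabilities. -/
def OrdConnected' (X : Type*) [Preorder X] : Prop :=
  ∀ x y : X, Relation.ReflTransGen (fun a b : X => a ≤ b ∨ b ≤ a) x y

/-- `R` is 2-torsion free. -/
def TwoTorsionFree (R : Type*) [CommRing R] : Prop := ∀ r : R, r + r = 0 → r = 0

set_option linter.unusedSectionVars false

section
variable [CommRing R] [Preorder X] [DecidableEq X] [LocallyFiniteOrder X]

lemma matrixUnit_apply (x y u v : X) :
    (matrixUnit x y : IncidenceAlgebra R X) u v = if u = x ∧ v = y ∧ x ≤ y then 1 else 0 := rfl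

lemma mul_matrixUnit (f : IncidenceAlgebra R X) (x y u v : X) :
    (f * (matrixUnit x y : IncidenceAlgebra R X)) u v = if v = y ∧ x ≤ y then f u x else 0 := by
  rw [IncidenceAlgebra.mul_apply]
  by_cases h : v = y ∧ x ≤ y
  · rw [if_pos h]
    have hsum : ∀ c ∈ Finset.Icc u v, f u c * matrixUnit x y c v =
        if c = x then f u c else 0 := by
      intro c _
      by_cases hc : c = x
      · simp [matrixUnit_apply, hc, h.1, h.2]
      · simp [matrixUnit_apply, hc]
    rw [Finset.sum_congr rfl hsum, Finset.sum_ite_eq' (Finset.Icc u v) x (f u ·)]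
    by_cases hux : u ≤ x
    · rw [if_pos (Finset.mem_Icc.2 ⟨hux, h.1 ▸ h.2⟩)]
    · rw [if_neg (fun hm => hux (Finset.mem_Icc.1 hm).1),
        IncidenceAlgebra.apply_eq_zero_of_not_le hux]
  · rw [if_neg h]
    refine Finset.sum_eq_zero fun c _ => ?_
    rw [matrixUnit_apply, if_neg (fun hc => h ⟨hc.2.1, hc.2.2⟩), mul_zero]

lemma matrixUnit_mul (f : IncidenceAlgebra R X) (x y u v : X) :
    ((matrixUnit x y : IncidenceAlgebra R X) * f) u v = if u = x ∧ x ≤ y then f y v else 0 := by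
  rw [IncidenceAlgebra.mul_apply]
  by_cases h : u = x ∧ x ≤ y
  · rw [if_pos h]
    have hsum : ∀ c ∈ Finset.Icc u v, matrixUnit x y u c * f c v =
        if c = y then f c v else 0 := by
      intro c _
      by_cases hc : c = y
      · simp [matrixUnit_apply, hc, h.1, h.2]
      · simp [matrixUnit_apply, hc]
    rw [Finset.sum_congr rfl hsum, Finset.sum_ite_eq' (Finset.Icc u v) y (f · v)]
    by_cases hyv : y ≤ v
    · rw [if_pos (Finset.mem_Icc.2 ⟨h.1 ▸ h.2, hyv⟩)]
    · rw [if_neg (fun hm => hyv (Finset.mem_Icc.1 hm).2),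
        IncidenceAlgebra.apply_eq_zero_of_not_le hyv]
  · rw [if_neg h]
    refine Finset.sum_eq_zero fun c _ => ?_
    rw [matrixUnit_apply, if_neg (fun hc => h ⟨hc.1, hc.2.2⟩), zero_mul]

lemma matrixUnit_mul_matrixUnit (a b c d : X) :
    (matrixUnit a b : IncidenceAlgebra R X) * matrixUnit c d =
      if b = c ∧ a ≤ b ∧ c ≤ d then matrixUnit a d else 0 := by
  by_cases h : b = c ∧ a ≤ b ∧ c ≤ d
  · rw [if_pos h]
    obtain ⟨hbc, hab, hcd⟩ := h
    subst hbc
    have had : a ≤ d := hab.trans hcd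
    ext u v
    rw [mul_matrixUnit, matrixUnit_apply, matrixUnit_apply]
    simp only [hab, hcd, had, and_true]
    split_ifs <;> tauto
  · rw [if_neg h]
    ext u v
    rw [mul_matrixUnit, matrixUnit_apply, IncidenceAlgebra.zero_apply]
    split_ifs <;> tauto

end

section
variable [CommRing R] [Preorder X] [DecidableEq X] [LocallyFiniteOrder X]

lemma lieBr_neg_left {A : Type*} [Ring A] (a b : A) : lieBr (-a) b = -lieBr a b := by
  unfold lieBr; rw [neg_mul, mul_neg]; abel

lemma key_step (htf : TwoTorsionFree R)
    (L : IncidenceAlgebra R X →ₗ[R] IncidenceAlgebra R X) (hL : IsLieTripleDer L)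
    (i x y : X) (hxy : x ≤ y) :
    L (matrixUnit i i) x x = L (matrixUnit i i) y y := by
  by_cases hne : x = y
  · rw [hne]
  have hyx : y ≠ x := Ne.symm hne
  have hExx : lieBr (matrixUnit x x) (matrixUnit x y) = (matrixUnit x y : IncidenceAlgebra R X) := by
    rw [lieBr, matrixUnit_mul_matrixUnit, matrixUnit_mul_matrixUnit,
      if_pos ⟨rfl, le_refl x, hxy⟩, if_neg (fun h => hyx h.1), sub_zero]
  have hEyy : lieBr (matrixUnit x y) (matrixUnit y y) = (matrixUnit x y : IncidenceAlgebra R X) := by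
    rw [lieBr, matrixUnit_mul_matrixUnit, matrixUnit_mul_matrixUnit,
      if_pos ⟨rfl, hxy, le_refl y⟩, if_neg (fun h => hne h.1.symm), sub_zero]
  by_cases hix : i = x
  · -- case i = x
    subst hix
    have h := hL (matrixUnit i i) (matrixUnit i y) (matrixUnit i i)
    rw [hExx] at h
    have harg : lieBr (matrixUnit i y) (matrixUnit i i) = (-(matrixUnit i y) : IncidenceAlgebra R X) := by
      rw [lieBr, matrixUnit_mul_matrixUnit, matrixUnit_mul_matrixUnit,
        if_neg (fun hc => hyx hc.1), if_pos ⟨rfl, le_refl i, hxy⟩, zero_sub]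
    rw [harg, map_neg] at h
    have h2 := congrArg (fun f : IncidenceAlgebra R X => f i y) h
    simp only [lieBr, sub_mul, mul_sub, IncidenceAlgebra.sub_apply, IncidenceAlgebra.add_apply,
      IncidenceAlgebra.neg_apply, mul_matrixUnit, matrixUnit_mul, matrixUnit_apply] at h2
    simp only [hxy, hyx, hne, le_refl, if_true, if_false, and_true, true_and, and_false,
      false_and, if_pos, IncidenceAlgebra.zero_apply, eq_self_iff_true] at h2
    have h3 : (L (matrixUnit i i) i i - L (matrixUnit i i) y y)
        + (L (matrixUnit i i) i i - L (matrixUnit i i) y y) = 0 := by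
      linear_combination h2
    have := htf _ h3
    linear_combination this
  by_cases hiy : i = y
  · -- case i = y
    subst hiy
    have h := hL (matrixUnit i i) (matrixUnit x i) (matrixUnit i i)
    have hEyy' : lieBr (matrixUnit i i) (matrixUnit x i) = (-(matrixUnit x i) : IncidenceAlgebra R X) := by
      rw [lieBr, matrixUnit_mul_matrixUnit, matrixUnit_mul_matrixUnit,
        if_neg (fun hc => hyx hc.1), if_pos ⟨rfl, hxy, le_refl i⟩, zero_sub]
    rw [hEyy'] at h
    rw [lieBr_neg_left, hEyy, map_neg] at h
    have h2 := congrArg (fun f : IncidenceAlgebra R X => f x i) h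
    simp only [lieBr, sub_mul, mul_sub, neg_mul, mul_neg, IncidenceAlgebra.sub_apply,
      IncidenceAlgebra.add_apply, IncidenceAlgebra.neg_apply, mul_matrixUnit, matrixUnit_mul,
      matrixUnit_apply] at h2
    simp only [hxy, hyx, hne, le_refl, if_true, if_false, and_true, true_and, and_false,
      false_and, IncidenceAlgebra.zero_apply, eq_self_iff_true] at h2
    have h3 : (L (matrixUnit i i) x x - L (matrixUnit i i) i i)
        + (L (matrixUnit i i) x x - L (matrixUnit i i) i i) = 0 := by
      linear_combination -h2
    have := htf _ h3
    linear_combination this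
  · -- generic case
    have h := hL (matrixUnit x x) (matrixUnit x y) (matrixUnit i i)
    rw [hExx] at h
    have harg : lieBr (matrixUnit x y) (matrixUnit i i) = (0 : IncidenceAlgebra R X) := by
      rw [lieBr, matrixUnit_mul_matrixUnit, matrixUnit_mul_matrixUnit,
        if_neg (fun hc => hiy hc.1.symm), if_neg (fun hc => hix hc.1), sub_zero]
    rw [harg, map_zero] at h
    have h2 := congrArg (fun f : IncidenceAlgebra R X => f x y) h
    simp only [lieBr, sub_mul, mul_sub, IncidenceAlgebra.sub_apply, IncidenceAlgebra.add_apply,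
      IncidenceAlgebra.neg_apply, mul_matrixUnit, matrixUnit_mul, matrixUnit_apply,
      IncidenceAlgebra.zero_apply] at h2
    simp only [hxy, hyx, hne, hix, hiy, Ne.symm hix, Ne.symm hiy, le_refl, if_true, if_false,
      and_true, true_and, and_false, false_and, IncidenceAlgebra.zero_apply,
      eq_self_iff_true] at h2
    linear_combination h2

end


/-- relation (R4). `C^{ii}_{xx} = C^{ii}_{ii}` for all `i, x`. -/
theorem lieTripleDer_rel_R4 [CommRing R] [Preorder X] [DecidableEq X]
    [Fintype X] [LocallyFiniteOrder X]
    (htf : TwoTorsionFree R) (hconn : OrdConnected' X)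
    (L : IncidenceAlgebra R X →ₗ[R] IncidenceAlgebra R X) (hL : IsLieTripleDer L) :
    ∀ i x : X, L (matrixUnit i i) x x = L (matrixUnit i i) i i := by
  intro i x
  have key : ∀ a b : X, a ≤ b → L (matrixUnit i i) a a = L (matrixUnit i i) b b :=
    fun a b hab => key_step htf L hL i a b hab
  have h := hconn i x
  induction h with
  | refl => rfl
  | tail _hab hbc ih =>
      rcases hbc with h | h
      · exact ((key _ _ h).symm).trans ih
      · exact (key _ _ h).trans ih
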